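/- Let 𝔛 be a locally small cocomplete category and f : A → B a compact arrow in 𝔛. Then f, viewed as an object of the coslice category A/𝔛, is a compact object, i.e. Hom_{A/𝔛}(f, −) preserves small filtered colimits. -/

import Mathlib

open CategoryTheory CategoryTheory.Limits Opposite

universe v u

namespace CompactArrows

variable {C : Type u} [Category.{v} C]

/-- The cocone on `D ⋙ Hom(X, -)` induced by a cocone on `D`. -/
def homCocone {J : Type v} [SmallCategory J] {D : J ⥤ C} (c : Cocone D) (X : C) :
    Cocone (D ⋙ coyoneda.obj (op X)) where
  pt := X ⟶ c.pt
  ι :=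
    { app := fun j => TypeCat.ofHom fun (g : X ⟶ D.obj j) => g ≫ c.ι.app j
      naturality := by
        intro j j' t
        ext g
        simp }

/-- The canonical comparison map `colim_j Hom(X, D_j) ⟶ Hom(X, colim D)`,
relative to a chosen (co)limiting cocone `c` on `D`. -/
noncomputable def canMap {J : Type v} [SmallCategory J] {D : J ⥤ C} (c : Cocone D) (X : C) :
    colimit (D ⋙ coyoneda.obj (op X)) ⟶ (X ⟶ c.pt) :=
  colimit.desc _ (homCocone c X)

/-- `X` is a compact object: `Hom(X, -)` preserves small filtered colimits. -/
def CompactObj (X : C) : Prop :=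
  ∀ (J : Type v) (_ : SmallCategory J) (_ : IsFiltered J) (D : J ⥤ C) (c : Cocone D),
    IsColimit c → IsIso (canMap c X)

/-- `f : A ⟶ B` is a compact arrow: for every small filtered diagram `D` the comparison
square between `colim_j Hom(B, D_j) → Hom(B, colim D)` and
`colim_j Hom(A, D_j) → Hom(A, colim D)` (via precomposition with `f`) is a pullback of sets. -/
def CompactArrow {A B : C} (f : A ⟶ B) : Prop :=
  ∀ (J : Type v) (_ : SmallCategory J) (_ : IsFiltered J) (D : J ⥤ C) (c : Cocone D),
    IsColimit c →
      IsPullback (canMap c B)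
        (colimMap (Functor.whiskerLeft D (coyoneda.map f.op)))
        (TypeCat.ofHom fun (g : B ⟶ c.pt) => f ≫ g)
        (canMap c A)

end CompactArrows

open CompactArrows

section Aux

variable {J : Type v} [SmallCategory J] {C : Type u} [Category.{v} C] {A : C}

/-- On a connected diagram in `Under A`, the leg-compositions with the structure maps
are all equal. -/
theorem under_const_comp [IsConnected J] {F : J ⥤ Under A}
    (s : Cocone (F ⋙ Under.forget A)) (j j' : J) :
    (F.obj j).hom ≫ s.ι.app j = (F.obj j').hom ≫ s.ι.app j' := by
  let α : (Functor.const J).obj A ⟶ (Functor.const J).obj s.pt :=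
    { app := fun j => (F.obj j).hom ≫ s.ι.app j
      naturality := by
        intro j j' t
        dsimp
        rw [Category.id_comp, Category.comp_id, ← s.w t]
        simp only [Functor.comp_map, Under.forget_map]
        erw [reassoc_of% (Under.w (F.map t))] }
  exact nat_trans_from_is_connected α j j'

/-- Raise a cocone on the underlying diagram to a cocone on the diagram in `Under A`. -/
noncomputable def raiseUnderCocone [IsConnected J] {F : J ⥤ Under A}
    (s : Cocone (F ⋙ Under.forget A)) : Cocone F where
  pt := Under.mk ((F.obj (Classical.arbitrary J)).hom ≫ s.ι.app (Classical.arbitrary J))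
  ι :=
    { app := fun j => Under.homMk (s.ι.app j)
        (under_const_comp s j (Classical.arbitrary J))
      naturality := by
        intro j j' t
        apply CategoryTheory.Under.UnderMorphism.ext
        dsimp
        rw [Category.comp_id]
        exact s.w t }

/-- The forgetful functor `Under A ⥤ C` preserves connected colimits (statement at the
level of a fixed colimit cocone). -/
noncomputable def underForgetMapIsColimit [IsConnected J] {F : J ⥤ Under A}
    {c : Cocone F} (hc : IsColimit c) : IsColimit ((Under.forget A).mapCocone c) where
  desc s := (hc.desc (raiseUnderCocone s)).right
  fac s j :=
    congrArg CategoryTheory.CommaMorphism.right (hc.fac (raiseUnderCocone s) j)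
  uniq s m hm := by
    have hw : c.pt.hom ≫ m = (raiseUnderCocone s).pt.hom := by
      have h1 : c.pt.hom = (F.obj (Classical.arbitrary J)).hom ≫
          (c.ι.app (Classical.arbitrary J)).right :=
        (Under.w (c.ι.app (Classical.arbitrary J))).symm
      have hm' : (c.ι.app (Classical.arbitrary J)).right ≫ m = s.ι.app (Classical.arbitrary J) :=
        hm (Classical.arbitrary J)
      rw [h1]
      erw [Category.assoc, hm']
      rfl
    have : Under.homMk m hw = hc.desc (raiseUnderCocone s) := by
      apply hc.uniq
      intro j
      apply CategoryTheory.Under.UnderMorphism.ext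
      exact hm j
    exact congrArg CategoryTheory.CommaMorphism.right this

end Aux

/-- if `f : A ⟶ B` is a compact arrow of a locally small cocomplete
category, then `f`, viewed as an object of the coslice category `A/𝔛`, is a compact
object. -/
theorem compactArrow_compactObj_under
    {C : Type u} [Category.{v} C] [HasColimits C]
    {A B : C} (f : A ⟶ B) (hf : CompactArrow f) :
    CompactObj (C := Under A) (Under.mk f) := by
  intro J _ hJ D c hc
  haveI : IsFiltered J := hJ
  haveI : IsConnected J := IsFiltered.isConnected J
  set D' : J ⥤ C := D ⋙ Under.forget A with hD'
  set c' : Cocone D' := (Under.forget A).mapCocone c with hc'def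
  have hc' : IsColimit c' := underForgetMapIsColimit hc
  have hpb := hf J inferInstance hJ D' c' hc'
  -- element-level computations of canMap
  have hcan : ∀ (X : C) (j : J) (u : X ⟶ D'.obj j),
      canMap c' X (colimit.ι (D' ⋙ coyoneda.obj (op X)) j u) = u ≫ c'.ι.app j := by
    intro X j u
    exact ConcreteCategory.congr_hom (colimit.ι_desc (homCocone c' X) j) u
  have hcanU : ∀ (j : J) (u : Under.mk f ⟶ D.obj j),
      canMap c (Under.mk f) (colimit.ι (D ⋙ coyoneda.obj (op (Under.mk f))) j u)
        = u ≫ c.ι.app j := by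
    intro j u
    exact ConcreteCategory.congr_hom (colimit.ι_desc (homCocone c (Under.mk f)) j) u
  -- element-level computation of the left vertical map
  have hvert : ∀ (j : J) (u : B ⟶ D'.obj j),
      colimMap (Functor.whiskerLeft D' (coyoneda.map f.op))
          (colimit.ι (D' ⋙ coyoneda.obj (op B)) j u)
        = colimit.ι (D' ⋙ coyoneda.obj (op A)) j (f ≫ u) := by
    intro j u
    exact ConcreteCategory.congr_hom (ι_colimMap (Functor.whiskerLeft D' (coyoneda.map f.op)) j) u
  rw [isIso_iff_bijective]
  constructor
  · -- injectivity
    intro x y hxy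
    obtain ⟨j₁, u₁, hx⟩ := Types.jointly_surjective' x
    obtain ⟨j₂, u₂, hy⟩ := Types.jointly_surjective' y
    -- push to a common index
    let k₀ := IsFiltered.max j₁ j₂
    let u : Under.mk f ⟶ D.obj k₀ := u₁ ≫ D.map (IsFiltered.leftToMax j₁ j₂)
    let v : Under.mk f ⟶ D.obj k₀ := u₂ ≫ D.map (IsFiltered.rightToMax j₁ j₂)
    have hx' : x = colimit.ι (D ⋙ coyoneda.obj (op (Under.mk f))) k₀ u := by
      rw [← hx, ← colimit.w (D ⋙ coyoneda.obj (op (Under.mk f)))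
        (IsFiltered.leftToMax j₁ j₂)]
      rfl
    have hy' : y = colimit.ι (D ⋙ coyoneda.obj (op (Under.mk f))) k₀ v := by
      rw [← hy, ← colimit.w (D ⋙ coyoneda.obj (op (Under.mk f)))
        (IsFiltered.rightToMax j₁ j₂)]
      rfl
    -- the two elements of the pullback vertex agree
    have hBeq : colimit.ι (D' ⋙ coyoneda.obj (op B)) k₀ u.right
        = colimit.ι (D' ⋙ coyoneda.obj (op B)) k₀ v.right := by
      -- use joint injectivity coming from the limit pullback cone
      let x' : PUnit.{v + 1} ⟶ colimit (D' ⋙ coyoneda.obj (op B)) :=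
        TypeCat.ofHom fun _ => colimit.ι (D' ⋙ coyoneda.obj (op B)) k₀ u.right
      let y' : PUnit.{v + 1} ⟶ colimit (D' ⋙ coyoneda.obj (op B)) :=
        TypeCat.ofHom fun _ => colimit.ι (D' ⋙ coyoneda.obj (op B)) k₀ v.right
      have h1 : x' ≫ canMap c' B = y' ≫ canMap c' B := by
        ext t
        show canMap c' B (colimit.ι (D' ⋙ coyoneda.obj (op B)) k₀ u.right)
          = canMap c' B (colimit.ι (D' ⋙ coyoneda.obj (op B)) k₀ v.right)
        rw [hcan B k₀ u.right, hcan B k₀ v.right]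
        have : canMap c (Under.mk f) x = canMap c (Under.mk f) y := hxy
        rw [hx', hy', hcanU k₀ u, hcanU k₀ v] at this
        exact congrArg CategoryTheory.CommaMorphism.right this
      have h2 : x' ≫ colimMap (Functor.whiskerLeft D' (coyoneda.map f.op))
          = y' ≫ colimMap (Functor.whiskerLeft D' (coyoneda.map f.op)) := by
        ext t
        show colimMap (Functor.whiskerLeft D' (coyoneda.map f.op))
            (colimit.ι (D' ⋙ coyoneda.obj (op B)) k₀ u.right)
          = colimMap (Functor.whiskerLeft D' (coyoneda.map f.op))
            (colimit.ι (D' ⋙ coyoneda.obj (op B)) k₀ v.right)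
        rw [hvert k₀ u.right, hvert k₀ v.right]
        have hu : f ≫ u.right = (D.obj k₀).hom := Under.w u
        have hv : f ≫ v.right = (D.obj k₀).hom := Under.w v
        erw [hu, hv]
      have := PullbackCone.IsLimit.hom_ext hpb.isLimit h1 h2
      exact ConcreteCategory.congr_hom this PUnit.unit
    obtain ⟨k, t, s, hts⟩ :=
      (Types.FilteredColimit.colimit_eq_iff (F := D' ⋙ coyoneda.obj (op B))).mp hBeq
    have : u ≫ D.map t = v ≫ D.map s := by
      apply CategoryTheory.Under.UnderMorphism.ext
      exact hts
    have wt : colimit.ι (D ⋙ coyoneda.obj (op (Under.mk f))) k (u ≫ D.map t)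
        = colimit.ι (D ⋙ coyoneda.obj (op (Under.mk f))) k₀ u :=
      ConcreteCategory.congr_hom (colimit.w (D ⋙ coyoneda.obj (op (Under.mk f))) t) u
    have ws : colimit.ι (D ⋙ coyoneda.obj (op (Under.mk f))) k (v ≫ D.map s)
        = colimit.ι (D ⋙ coyoneda.obj (op (Under.mk f))) k₀ v :=
      ConcreteCategory.congr_hom (colimit.w (D ⋙ coyoneda.obj (op (Under.mk f))) s) v
    rw [hx', hy', ← wt, ← ws, this]
  · -- surjectivity
    intro g
    have hg : f ≫ g.right = c.pt.hom := Under.w g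
    let j₀ : J := Classical.arbitrary J
    let a : colimit (D' ⋙ coyoneda.obj (op A)) :=
      colimit.ι (D' ⋙ coyoneda.obj (op A)) j₀ (D.obj j₀).hom
    -- the compatible pair (g.right, a)
    let b' : PUnit.{v + 1} ⟶ (B ⟶ c'.pt) := TypeCat.ofHom fun _ => g.right
    let a' : PUnit.{v + 1} ⟶ colimit (D' ⋙ coyoneda.obj (op A)) := TypeCat.ofHom fun _ => a
    have hcomm : b' ≫ TypeCat.ofHom (fun (h : B ⟶ c'.pt) => f ≫ h) = a' ≫ canMap c' A := by
      ext t
      show f ≫ g.right = canMap c' A a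
      rw [hcan A j₀ (D.obj j₀).hom, hg]
      exact (Under.w (c.ι.app j₀)).symm
    let p' := PullbackCone.IsLimit.lift hpb.isLimit b' a' hcomm
    have hp1 : p' ≫ canMap c' B = b' := PullbackCone.IsLimit.lift_fst hpb.isLimit b' a' hcomm
    have hp2 : p' ≫ colimMap (Functor.whiskerLeft D' (coyoneda.map f.op)) = a' :=
      PullbackCone.IsLimit.lift_snd hpb.isLimit b' a' hcomm
    obtain ⟨j₁, h, hph⟩ := Types.jointly_surjective' (p' PUnit.unit)
    have hfac : colimit.ι (D' ⋙ coyoneda.obj (op A)) j₁ (f ≫ h) = a := by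
      rw [← hvert j₁ h, hph]
      exact ConcreteCategory.congr_hom hp2 PUnit.unit
    obtain ⟨k, t, s, hts⟩ :=
      (Types.FilteredColimit.colimit_eq_iff (F := D' ⋙ coyoneda.obj (op A))).mp hfac
    have hts' : f ≫ (h ≫ D'.map t) = (D.obj k).hom := by
      have h2 : (D.obj j₀).hom ≫ D'.map s = (D.obj k).hom := Under.w (D.map s)
      have h1 : (f ≫ h) ≫ D'.map t = (D.obj j₀).hom ≫ D'.map s := hts
      rw [← h2, ← h1, Category.assoc]
    refine ⟨colimit.ι (D ⋙ coyoneda.obj (op (Under.mk f))) k (Under.homMk (h ≫ D'.map t) hts'), ?_⟩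
    rw [hcanU]
    apply CategoryTheory.Under.UnderMorphism.ext
    show (h ≫ D'.map t) ≫ (c.ι.app k).right = g.right
    have hw : D'.map t ≫ c'.ι.app k = c'.ι.app j₁ := c'.w t
    have : (c.ι.app k).right = c'.ι.app k := rfl
    erw [this, Category.assoc, hw]
    have : h ≫ c'.ι.app j₁ = canMap c' B (p' PUnit.unit) := by
      rw [← hph, hcan B j₁ h]
    erw [this]
    exact ConcreteCategory.congr_hom hp1 PUnit.unit
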